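/- arXiv:2109.13289 — 4 statements merged into one kernel-verified Lean document; each statement's English description precedes it below -/
import Mathlib

section
/- Let Δ be an ADE root system, I ⊆ Δ, and π_I the linear quotient map killing the simple roots α_i with i ∈ I. If α and α' are positive roots with π_I(α) = π_I(α') ≠ 0, and some element w of the parabolic subgroup W_I maps the hyperplane α^⊥ to (α')^⊥, then some element of W_I maps α to α' (not to −α'). -/
/-!
STATEMENT 1: Let `Δ` be an ADE root system, `I ⊆ Δ`, and `π_I` the linear quotient map
killing the simple roots `αᵢ` with `i ∈ I`.  If `α` and `α'` are positive roots with
`π_I(α) = π_I(α') ≠ 0`, and some element `w` of the parabolic subgroup `W_I` maps the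
hyperplane `α^⊥` to `(α')^⊥`, then some element of `W_I` maps `α` to `α'` (not to `-α'`).

We work in simple-root coordinates `Δ → ℝ`, so the simple roots are `Pi.single i 1`,
positivity means non-negative coordinates, and `π_I(α) = π_I(α')` means the coordinates
agree outside `I`.  The `W`-invariant inner product is a symmetric bilinear form `B`;
the simple reflection `sᵢ` is the `B`-orthogonal reflection in `αᵢ`, and `α^⊥` is
`{x | B α x = 0}`.  The parabolic subgroup `W_I` is the subgroup of linear automorphisms
generated by `{sᵢ : i ∈ I}`.
-/
theorem stmt1 {Δ : Type*} [Fintype Δ] [DecidableEq Δ]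
    (Φ : Set (Δ → ℝ)) (hΦfin : Φ.Finite)
    (B : LinearMap.BilinForm ℝ (Δ → ℝ))
    (hBsymm : ∀ x y, B x y = B y x)
    (hBnd : ∀ i : Δ, B (Pi.single i 1) (Pi.single i 1) ≠ 0)
    (s : Δ → ((Δ → ℝ) ≃ₗ[ℝ] (Δ → ℝ)))
    -- sᵢ is the B-orthogonal reflection in the simple root αᵢ = Pi.single i 1
    (hrefl : ∀ i x, s i x =
      x - (2 * B x (Pi.single i 1) / B (Pi.single i 1) (Pi.single i 1)) • (Pi.single i 1 : Δ → ℝ))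
    -- the simple reflections permute the (finite) set of roots
    (hperm : ∀ i, ∀ α ∈ Φ, s i α ∈ Φ)
    -- every root is positive or negative
    (hpm : ∀ α ∈ Φ, (∀ j, 0 ≤ α j) ∨ (∀ j, α j ≤ 0))
    -- the system is reduced
    (hreduced : ∀ α ∈ Φ, ∀ t : ℝ, t • α ∈ Φ → t = 1 ∨ t = -1)
    -- the simple roots are roots
    (hsimple : ∀ i, Pi.single i (1 : ℝ) ∈ Φ)
    (I : Set Δ)
    (α α' : Δ → ℝ) (hα : α ∈ Φ) (hα' : α' ∈ Φ)
    (hpos : ∀ j, 0 ≤ α j) (hpos' : ∀ j, 0 ≤ α' j)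
    -- π_I(α) = π_I(α') ≠ 0
    (hproj : ∀ j, j ∉ I → α j = α' j)
    (hne : ∃ j, j ∉ I ∧ α j ≠ 0)
    (w : (Δ → ℝ) ≃ₗ[ℝ] (Δ → ℝ))
    (hw : w ∈ Subgroup.closure (s '' I))
    -- w maps the hyperplane α^⊥ onto (α')^⊥
    (hplane : (fun x => w x) '' {x | B α x = 0} = {x | B α' x = 0}) :
    ∃ u ∈ Subgroup.closure (s '' I), u α = α' := by
  classical
  obtain ⟨j0, hj0I, hj0ne⟩ := hne
  -- the reflections preserve B
  have hBs : ∀ i x y, B (s i x) (s i y) = B x y := by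
    intro i x y
    have hd := hBnd i
    rw [hrefl i x, hrefl i y]
    simp only [map_sub, map_smul, LinearMap.sub_apply, LinearMap.smul_apply, smul_eq_mul]
    rw [hBsymm (Pi.single i 1) y]
    field_simp
    ring
  -- the reflections are involutions
  have hss : ∀ i x, s i (s i x) = x := by
    intro i x
    have hd := hBnd i
    rw [hrefl i (s i x), hrefl i x]
    simp only [map_sub, map_smul, LinearMap.sub_apply, LinearMap.smul_apply, smul_eq_mul]
    rw [sub_sub, ← add_smul]
    have hc : 2 * B x (Pi.single i 1) / B (Pi.single i 1) (Pi.single i 1)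
        + 2 * (B x (Pi.single i 1)
            - 2 * B x (Pi.single i 1) / B (Pi.single i 1) (Pi.single i 1)
              * B (Pi.single i 1) (Pi.single i 1))
          / B (Pi.single i 1) (Pi.single i 1) = 0 := by
      field_simp
      ring
    rw [hc, zero_smul, sub_zero]
  have hsinv : ∀ i, (s i)⁻¹ = s i := by
    intro i
    refine inv_eq_of_mul_eq_one_right (LinearEquiv.ext fun x => ?_)
    exact hss i x
  -- s i (e i) = - e i
  have hsei : ∀ i, s i (Pi.single i 1 : Δ → ℝ) = -(Pi.single i 1 : Δ → ℝ) := by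
    intro i
    have hd := hBnd i
    rw [hrefl]
    rw [mul_div_assoc, div_self hd, mul_one, two_smul]
    abel
  -- the full group generated by all reflections
  set G := Subgroup.closure (Set.range s) with hGdef
  have hwG : w ∈ G := Subgroup.closure_mono (Set.image_subset_range s I) hw
  -- every element of G maps Φ into Φ
  have hGmap : ∀ g ∈ G, ∀ β ∈ Φ, g β ∈ Φ := by
    have key : ∀ g ∈ G, (∀ β ∈ Φ, g β ∈ Φ) ∧ (∀ β ∈ Φ, g⁻¹ β ∈ Φ) := by
      intro g hg
      refine Subgroup.closure_induction (p := fun g _ => (∀ β ∈ Φ, g β ∈ Φ) ∧ (∀ β ∈ Φ, g⁻¹ β ∈ Φ))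
        ?_ ?_ ?_ ?_ hg
      · rintro x ⟨i, rfl⟩
        exact ⟨hperm i, by rw [hsinv]; exact hperm i⟩
      · exact ⟨fun β hβ => hβ, fun β hβ => hβ⟩
      · rintro x y hx hy ⟨hx1, hx2⟩ ⟨hy1, hy2⟩
        refine ⟨fun β hβ => ?_, fun β hβ => ?_⟩
        · show (x * y) β ∈ Φ
          show x (y β) ∈ Φ
          exact hx1 _ (hy1 _ hβ)
        · rw [mul_inv_rev]
          show y⁻¹ (x⁻¹ β) ∈ Φ
          exact hy2 _ (hx2 _ hβ)
      · rintro x hx ⟨hx1, hx2⟩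
        exact ⟨hx2, by rw [inv_inv]; exact hx1⟩
    exact fun g hg => (key g hg).1
  -- every element of G preserves B
  have hGB : ∀ g ∈ G, ∀ x y, B (g x) (g y) = B x y := by
    intro g hg
    refine Subgroup.closure_induction (p := fun g _ => ∀ x y, B (g x) (g y) = B x y)
      ?_ ?_ ?_ ?_ hg
    · rintro x ⟨i, rfl⟩; exact hBs i
    · intro x y; rfl
    · intro x y hx hy h1 h2 a b
      show B (x (y a)) (x (y b)) = B a b
      rw [h1, h2]
    · intro x hx h1 a b
      have := h1 (x⁻¹ a) (x⁻¹ b)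
      rwa [show x (x⁻¹ a) = a from x.apply_symm_apply a,
        show x (x⁻¹ b) = b from x.apply_symm_apply b, eq_comm] at this
  -- G is finite
  have hGfin : (G : Set ((Δ → ℝ) ≃ₗ[ℝ] (Δ → ℝ))).Finite := by
    have hpi : (Set.univ.pi fun _ : Δ => Φ).Finite := Set.Finite.pi fun _ => hΦfin
    refine Set.Finite.of_finite_image (f := fun g => fun i => g (Pi.single i 1))
      (hpi.subset ?_) ?_
    · rintro _ ⟨g, hg, rfl⟩ i _
      exact hGmap g hg _ (hsimple i)
    · intro g hg g' hg' hgg'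
      have hbas : ∀ i, g (Pi.single i 1 : Δ → ℝ) = g' (Pi.single i 1) :=
        fun i => congrFun hgg' i
      refine LinearEquiv.ext fun x => ?_
      have hx : x = ∑ i, x i • (Pi.single i 1 : Δ → ℝ) := by
        conv_lhs => rw [← Finset.univ_sum_single x]
        refine Finset.sum_congr rfl fun i _ => ?_
        rw [← Pi.single_smul, smul_eq_mul, mul_one]
      rw [hx, map_sum, map_sum]
      exact Finset.sum_congr rfl fun i _ => by rw [map_smul, map_smul, hbas i]
  -- invariance of the averaged product
  have hPinv : ∀ h ∈ G, ∀ x y : Δ → ℝ,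
      (∑ g ∈ hGfin.toFinset, ∑ j, g (h x) j * g (h y) j)
        = ∑ g ∈ hGfin.toFinset, ∑ j, g x j * g y j := by
    intro h hh x y
    refine Finset.sum_nbij' (fun g => g * h) (fun g => g * h⁻¹) ?_ ?_ ?_ ?_ ?_
    · intro a ha
      rw [Set.Finite.mem_toFinset] at ha ⊢
      exact mul_mem ha hh
    · intro a ha
      rw [Set.Finite.mem_toFinset] at ha ⊢
      exact mul_mem ha (inv_mem hh)
    · intro a _; group
    · intro a _; group
    · intro a _
      exact Finset.sum_congr rfl fun j _ => rfl
  -- B is nondegenerate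
  have hnd0 : ∀ x : Δ → ℝ, (∀ y, B x y = 0) → x = 0 := by
    intro x hx
    have hfix : ∀ i, s i x = x := by
      intro i
      rw [hrefl, hx, mul_zero, zero_div, zero_smul, sub_zero]
    -- P x (e i) = 0 for all i
    have hPxe : ∀ i, (∑ g ∈ hGfin.toFinset, ∑ j, g x j * g (Pi.single i 1 : Δ → ℝ) j) = 0 := by
      intro i
      have hmem : s i ∈ G := Subgroup.subset_closure ⟨i, rfl⟩
      have h1 := hPinv (s i) hmem x (Pi.single i 1)
      rw [hfix i, hsei i] at h1
      have h2 : ∀ g ∈ hGfin.toFinset,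
          (∑ j, g x j * g (-(Pi.single i 1 : Δ → ℝ)) j)
            = -∑ j, g x j * g (Pi.single i 1 : Δ → ℝ) j := by
        intro g _
        rw [← Finset.sum_neg_distrib]
        refine Finset.sum_congr rfl fun j _ => ?_
        rw [map_neg]
        simp [mul_neg]
      rw [Finset.sum_congr rfl h2, Finset.sum_neg_distrib] at h1
      linarith [h1]
    -- expand g y in terms of the basis
    have hgy : ∀ (g : (Δ → ℝ) ≃ₗ[ℝ] (Δ → ℝ)) (y : Δ → ℝ) (j : Δ),
        g y j = ∑ i, y i * g (Pi.single i 1 : Δ → ℝ) j := by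
      intro g y j
      have hy : y = ∑ i, y i • (Pi.single i 1 : Δ → ℝ) := by
        conv_lhs => rw [← Finset.univ_sum_single y]
        refine Finset.sum_congr rfl fun i _ => ?_
        rw [← Pi.single_smul, smul_eq_mul, mul_one]
      conv_lhs => rw [hy]
      rw [map_sum, Finset.sum_apply]
      refine Finset.sum_congr rfl fun i _ => ?_
      rw [map_smul]
      simp
    -- linearity of P x in the second variable
    have hQ : ∀ y : Δ → ℝ,
        (∑ g ∈ hGfin.toFinset, ∑ j, g x j * g y j)
          = ∑ i, y i * ∑ g ∈ hGfin.toFinset, ∑ j, g x j * g (Pi.single i 1 : Δ → ℝ) j := by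
      intro y
      have step : ∀ g ∈ hGfin.toFinset, (∑ j, g x j * g y j)
          = ∑ i, y i * ∑ j, g x j * g (Pi.single i 1 : Δ → ℝ) j := by
        intro g _
        calc (∑ j, g x j * g y j)
            = ∑ j, ∑ i, y i * (g x j * g (Pi.single i 1 : Δ → ℝ) j) := by
              refine Finset.sum_congr rfl fun j _ => ?_
              rw [hgy g y j, Finset.mul_sum]
              exact Finset.sum_congr rfl fun i _ => by ring
          _ = ∑ i, ∑ j, y i * (g x j * g (Pi.single i 1 : Δ → ℝ) j) := Finset.sum_comm
          _ = ∑ i, y i * ∑ j, g x j * g (Pi.single i 1 : Δ → ℝ) j := by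
              exact Finset.sum_congr rfl fun i _ => (Finset.mul_sum _ _ _).symm
      calc (∑ g ∈ hGfin.toFinset, ∑ j, g x j * g y j)
          = ∑ g ∈ hGfin.toFinset, ∑ i, y i
              * ∑ j, g x j * g (Pi.single i 1 : Δ → ℝ) j := Finset.sum_congr rfl step
        _ = ∑ i, ∑ g ∈ hGfin.toFinset, y i
              * ∑ j, g x j * g (Pi.single i 1 : Δ → ℝ) j := Finset.sum_comm
        _ = ∑ i, y i * ∑ g ∈ hGfin.toFinset, ∑ j, g x j * g (Pi.single i 1 : Δ → ℝ) j := by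
            exact Finset.sum_congr rfl fun i _ => (Finset.mul_sum _ _ _).symm
    have hxx : (∑ g ∈ hGfin.toFinset, ∑ j, g x j * g x j) = 0 := by
      rw [hQ x]
      refine Finset.sum_eq_zero fun i _ => ?_
      rw [hPxe i, mul_zero]
    -- extract the identity term
    have h1G : (1 : (Δ → ℝ) ≃ₗ[ℝ] (Δ → ℝ)) ∈ hGfin.toFinset := by
      rw [Set.Finite.mem_toFinset]; exact one_mem G
    have hterm : (∑ j, (1 : (Δ → ℝ) ≃ₗ[ℝ] (Δ → ℝ)) x j * (1 : (Δ → ℝ) ≃ₗ[ℝ] (Δ → ℝ)) x j) = 0 := by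
      have hnn : ∀ g ∈ hGfin.toFinset, 0 ≤ ∑ j, g x j * g x j :=
        fun g _ => Finset.sum_nonneg fun j _ => mul_self_nonneg _
      exact (Finset.sum_eq_zero_iff_of_nonneg hnn).mp hxx 1 h1G
    have hterm' : (∑ j, x j * x j) = 0 := hterm
    funext j
    have := (Finset.sum_eq_zero_iff_of_nonneg
      (fun j _ => mul_self_nonneg (x j))).mp hterm' j (Finset.mem_univ j)
    exact mul_self_eq_zero.mp this
  -- elements of the parabolic subgroup fix coordinates outside I
  have hWcoord : ∀ g ∈ Subgroup.closure (s '' I), ∀ x : Δ → ℝ, ∀ j ∉ I, g x j = x j := by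
    have key : ∀ g ∈ Subgroup.closure (s '' I),
        (∀ x : Δ → ℝ, ∀ j ∉ I, g x j = x j) ∧ (∀ x : Δ → ℝ, ∀ j ∉ I, g⁻¹ x j = x j) := by
      intro g hg
      refine Subgroup.closure_induction
        (p := fun g _ => (∀ x : Δ → ℝ, ∀ j ∉ I, g x j = x j)
          ∧ (∀ x : Δ → ℝ, ∀ j ∉ I, g⁻¹ x j = x j)) ?_ ?_ ?_ ?_ hg
      · rintro _ ⟨i, hiI, rfl⟩
        have base : ∀ x : Δ → ℝ, ∀ j ∉ I, s i x j = x j := by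
          intro x j hj
          have hji : j ≠ i := fun h => hj (h ▸ hiI)
          rw [hrefl]
          simp [Pi.single_eq_of_ne hji]
        exact ⟨base, by rw [hsinv]; exact base⟩
      · exact ⟨fun x j _ => rfl, fun x j _ => rfl⟩
      · rintro x y hx hy ⟨hx1, hx2⟩ ⟨hy1, hy2⟩
        refine ⟨fun z j hj => ?_, fun z j hj => ?_⟩
        · show x (y z) j = z j
          rw [hx1 _ j hj, hy1 _ j hj]
        · rw [mul_inv_rev]
          show y⁻¹ (x⁻¹ z) j = z j
          rw [hy2 _ j hj, hx2 _ j hj]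
      · rintro x hx ⟨hx1, hx2⟩
        exact ⟨hx2, by rw [inv_inv]; exact hx1⟩
    exact fun g hg => (key g hg).1
  -- main argument
  have hwB : ∀ x y, B (w x) (w y) = B x y := hGB w hwG
  have hwΦ : w α ∈ Φ := hGmap w hwG α hα
  -- kernels agree
  have hker : ∀ x, B (w α) x = 0 ↔ B α' x = 0 := by
    intro x
    constructor
    · intro hx
      have h1 : B α (w.symm x) = 0 := by
        have := hwB α (w.symm x)
        rw [w.apply_symm_apply] at this
        rw [← this, hx]
      have h2 : x ∈ (fun x => w x) '' {x | B α x = 0} :=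
        ⟨w.symm x, h1, w.apply_symm_apply x⟩
      rw [hplane] at h2
      exact h2
    · intro hx
      have h2 : x ∈ (fun x => w x) '' {x | B α x = 0} := by rw [hplane]; exact hx
      obtain ⟨z, hz, rfl⟩ := h2
      rw [hwB α z, hz]
  -- α' is not in the radical
  have hα'j0 : α' j0 ≠ 0 := by rw [← hproj j0 hj0I]; exact hj0ne
  have hzex : ∃ z, B α' z ≠ 0 := by
    by_contra h
    push_neg at h
    exact hα'j0 (by rw [hnd0 α' h]; rfl)
  obtain ⟨z, hz⟩ := hzex
  set c : ℝ := B (w α) z / B α' z with hc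
  have hprop : ∀ y, B (w α) y = c * B α' y := by
    intro y
    have hky : B α' (y - (B α' y / B α' z) • z) = 0 := by
      rw [map_sub, map_smul, smul_eq_mul]
      field_simp
      ring
    have hkw := (hker _).mpr hky
    rw [map_sub, map_smul, smul_eq_mul, sub_eq_zero] at hkw
    rw [hkw, hc]
    field_simp
  have heq : w α = c • α' := by
    have hsub : ∀ y, B (w α - c • α') y = 0 := by
      intro y
      rw [map_sub, map_smul, LinearMap.sub_apply, LinearMap.smul_apply, smul_eq_mul,
        hprop y, sub_self]
    have := hnd0 _ hsub
    rwa [sub_eq_zero] at this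
  have hcΦ : c • α' ∈ Φ := heq ▸ hwΦ
  rcases hreduced α' hα' c hcΦ with hc1 | hcm1
  · exact ⟨w, hw, by rw [heq, hc1, one_smul]⟩
  · exfalso
    have h1 : w α j0 = α' j0 := by
      rw [hWcoord w hw α j0 hj0I, hproj j0 hj0I]
    rw [heq, hcm1] at h1
    have : (-1 : ℝ) * α' j0 = α' j0 := h1
    have : α' j0 = 0 := by linarith
    exact hα'j0 this
end

section
/- In the root system A_n, with positive roots α_{ij} = α_i + α_{i+1} + ⋯ + α_j for 1 ≤ i ≤ j ≤ n, two positive roots α_{ij} and α_{kl} satisfy π_I(α_{ij}) = π_I(α_{kl}) ≠ 0 (for a subset I of nodes) if and only if they lie in the same orbit under the parabolic subgroup W_I. -/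
/-!
STATEMENT 2: In the root system `Aₙ` with positive roots `α_{ij} = αᵢ + ⋯ + αⱼ`
(0-based indexing here, so `0 ≤ i ≤ j ≤ n-1`), two positive roots `α_{ij}` and `α_{kl}`
whose images under `π_I` are nonzero satisfy `π_I(α_{ij}) = π_I(α_{kl})` if and only if
they lie in the same orbit under the parabolic subgroup `W_I`.

Roots are written in simple-root coordinates, so `π_I` is the restriction of the
coordinates to the complement of `I`; thus `π_I(α) = π_I(α')` means the coordinates
agree outside `I`.  The parabolic subgroup `W_I` is realised as the submonoid of
`Function.End (Fin n → ℤ)` generated by the simple reflections `{sᵢ : i ∈ I}` (since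
each reflection is an involution, this submonoid coincides with the subgroup they
generate).
-/

/-- The positive root `α_{ij} = αᵢ + ⋯ + αⱼ` of `Aₙ`, in simple-root coordinates. -/
def alphaA (n : ℕ) (i j : ℕ) : Fin n → ℤ :=
  fun k => if i ≤ (k : ℕ) ∧ (k : ℕ) ≤ j then 1 else 0

/-- The simple reflection `sᵢ` of the Weyl group of `Aₙ`, acting on simple-root
coordinates. -/
def reflA (n : ℕ) (i : Fin n) : Function.End (Fin n → ℤ) :=
  fun x k =>
    if k = i then
      -x i + ∑ j : Fin n, (if (i : ℕ) + 1 = (j : ℕ) ∨ (j : ℕ) + 1 = (i : ℕ) then x j else 0)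
    else x k

lemma sum_nbrs (n : ℕ) (p : Fin n) (x : Fin n → ℤ) :
    ∑ j : Fin n, (if (p : ℕ) + 1 = (j : ℕ) ∨ (j : ℕ) + 1 = (p : ℕ) then x j else 0)
      = (if h : (p : ℕ) + 1 < n then x ⟨(p : ℕ) + 1, h⟩ else 0)
        + (if h : 0 < (p : ℕ) then x ⟨(p : ℕ) - 1, by omega⟩ else 0) := by
  have hsplit : ∀ j : Fin n,
      (if (p : ℕ) + 1 = (j : ℕ) ∨ (j : ℕ) + 1 = (p : ℕ) then x j else 0)
        = (if (p : ℕ) + 1 = (j : ℕ) then x j else 0)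
          + (if (j : ℕ) + 1 = (p : ℕ) then x j else 0) := by
    intro j
    by_cases h2 : (p : ℕ) + 1 = (j : ℕ)
    · by_cases h3 : (j : ℕ) + 1 = (p : ℕ)
      · omega
      · simp [h2, h3]
    · by_cases h3 : (j : ℕ) + 1 = (p : ℕ)
      · simp [h2, h3]
      · simp [h2, h3]
  simp only [hsplit, Finset.sum_add_distrib]
  congr 1
  · by_cases h : (p : ℕ) + 1 < n
    · rw [dif_pos h, Finset.sum_eq_single (⟨(p : ℕ) + 1, h⟩ : Fin n)]
      · simp
      · intro b _ hb
        rw [if_neg]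
        intro hc
        exact hb (Fin.ext (by simp [← hc]))
      · simp
    · rw [dif_neg h, Finset.sum_eq_zero]
      intro b _
      rw [if_neg]
      intro hc
      omega
  · by_cases h : 0 < (p : ℕ)
    · rw [dif_pos h, Finset.sum_eq_single (⟨(p : ℕ) - 1, by omega⟩ : Fin n)]
      · rw [if_pos (by simp; omega)]
      · intro b _ hb
        rw [if_neg]
        intro hc
        exact hb (Fin.ext (by simp; omega))
      · simp
    · rw [dif_neg h, Finset.sum_eq_zero]
      intro b _
      rw [if_neg]
      intro hc
      omega

lemma refl_left_contract (n i j : ℕ) (hij : i < j) (hjn : j < n) :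
    reflA n ⟨i, by omega⟩ (alphaA n i j) = alphaA n (i + 1) j := by
  funext k
  simp only [reflA]
  by_cases hk : k = (⟨i, by omega⟩ : Fin n)
  · rw [if_pos hk, sum_nbrs n ⟨i, by omega⟩ (alphaA n i j), hk]
    simp only [alphaA, Fin.val_mk]
    split_ifs <;> simp_all <;> omega
  · rw [if_neg hk]
    have hki : (k : ℕ) ≠ i := fun h => hk (Fin.ext h)
    simp only [alphaA]
    split_ifs <;> omega

lemma refl_left_extend (n i j : ℕ) (hi : 0 < i) (hij : i ≤ j) (hjn : j < n) :
    reflA n ⟨i - 1, by omega⟩ (alphaA n i j) = alphaA n (i - 1) j := by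
  funext k
  simp only [reflA]
  by_cases hk : k = (⟨i - 1, by omega⟩ : Fin n)
  · rw [if_pos hk, sum_nbrs n ⟨i - 1, by omega⟩ (alphaA n i j), hk]
    simp only [alphaA, Fin.val_mk]
    split_ifs <;> simp_all <;> omega
  · rw [if_neg hk]
    have hki : (k : ℕ) ≠ i - 1 := fun h => hk (Fin.ext h)
    simp only [alphaA]
    split_ifs <;> omega

lemma refl_right_contract (n i j : ℕ) (hij : i < j) (hjn : j < n) :
    reflA n ⟨j, hjn⟩ (alphaA n i j) = alphaA n i (j - 1) := by
  funext k
  simp only [reflA]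
  by_cases hk : k = (⟨j, hjn⟩ : Fin n)
  · rw [if_pos hk, sum_nbrs n ⟨j, hjn⟩ (alphaA n i j), hk]
    simp only [alphaA, Fin.val_mk]
    split_ifs <;> simp_all <;> omega
  · rw [if_neg hk]
    have hki : (k : ℕ) ≠ j := fun h => hk (Fin.ext h)
    simp only [alphaA]
    split_ifs <;> omega

lemma refl_right_extend (n i j : ℕ) (hij : i ≤ j) (hjn : j + 1 < n) :
    reflA n ⟨j + 1, hjn⟩ (alphaA n i j) = alphaA n i (j + 1) := by
  funext k
  simp only [reflA]
  by_cases hk : k = (⟨j + 1, hjn⟩ : Fin n)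
  · rw [if_pos hk, sum_nbrs n ⟨j + 1, hjn⟩ (alphaA n i j), hk]
    simp only [alphaA, Fin.val_mk]
    split_ifs <;> simp_all <;> omega
  · rw [if_neg hk]
    have hki : (k : ℕ) ≠ j + 1 := fun h => hk (Fin.ext h)
    simp only [alphaA]
    split_ifs <;> omega

lemma mem_gen (n : ℕ) (I : Set (Fin n)) {p : Fin n} (hp : p ∈ I) :
    reflA n p ∈ Submonoid.closure (reflA n '' I) :=
  Submonoid.subset_closure ⟨p, hp, rfl⟩

lemma moveL_contract (n : ℕ) (I : Set (Fin n)) (j : ℕ) (hjn : j < n) :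
    ∀ d i, i + d ≤ j → (∀ m (hm : m < n), i ≤ m → m < i + d → (⟨m, hm⟩ : Fin n) ∈ I) →
    ∃ w ∈ Submonoid.closure (reflA n '' I), w (alphaA n i j) = alphaA n (i + d) j := by
  intro d
  induction d with
  | zero => exact fun i _ _ => ⟨1, Submonoid.one_mem _, rfl⟩
  | succ d ih =>
    intro i hd hI
    obtain ⟨w, hw, hweq⟩ := ih i (by omega) (fun m hm h1 h2 => hI m hm h1 (by omega))
    have hmem : ((i + d : ℕ)) < n := by omega
    refine ⟨reflA n ⟨i + d, hmem⟩ * w, Submonoid.mul_mem _ (mem_gen n I (hI _ hmem (by omega) (by omega))) hw, ?_⟩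
    show reflA n ⟨i + d, hmem⟩ (w (alphaA n i j)) = _
    rw [hweq, refl_left_contract n (i + d) j (by omega) hjn]
    rfl

lemma moveL_extend (n : ℕ) (I : Set (Fin n)) (j : ℕ) (hjn : j < n) :
    ∀ d k, k + d ≤ j → (∀ m (hm : m < n), k ≤ m → m < k + d → (⟨m, hm⟩ : Fin n) ∈ I) →
    ∃ w ∈ Submonoid.closure (reflA n '' I), w (alphaA n (k + d) j) = alphaA n k j := by
  intro d
  induction d with
  | zero => exact fun k _ _ => ⟨1, Submonoid.one_mem _, rfl⟩
  | succ d ih =>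
    intro k hd hI
    obtain ⟨w, hw, hweq⟩ := ih k (by omega) (fun m hm h1 h2 => hI m hm h1 (by omega))
    have hmem : ((k + d : ℕ)) < n := by omega
    have hstep : reflA n ⟨k + d, hmem⟩ (alphaA n (k + d + 1) j) = alphaA n (k + d) j := by
      have := refl_left_extend n (k + d + 1) j (by omega) (by omega) hjn
      exact this
    refine ⟨w * reflA n ⟨k + d, hmem⟩, Submonoid.mul_mem _ hw (mem_gen n I (hI _ hmem (by omega) (by omega))), ?_⟩
    show w (reflA n ⟨k + d, hmem⟩ (alphaA n (k + (d + 1)) j)) = _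
    rw [show k + (d + 1) = k + d + 1 by omega, hstep, hweq]

lemma moveR_extend (n : ℕ) (I : Set (Fin n)) (k : ℕ) :
    ∀ d j, k ≤ j → j + d < n → (∀ m (hm : m < n), j < m → m ≤ j + d → (⟨m, hm⟩ : Fin n) ∈ I) →
    ∃ w ∈ Submonoid.closure (reflA n '' I), w (alphaA n k j) = alphaA n k (j + d) := by
  intro d
  induction d with
  | zero => exact fun j _ _ _ => ⟨1, Submonoid.one_mem _, rfl⟩
  | succ d ih =>
    intro j hkj hd hI
    obtain ⟨w, hw, hweq⟩ := ih j hkj (by omega) (fun m hm h1 h2 => hI m hm h1 (by omega))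
    have hmem : ((j + d + 1 : ℕ)) < n := by omega
    refine ⟨reflA n ⟨j + d + 1, hmem⟩ * w, Submonoid.mul_mem _ (mem_gen n I (hI _ hmem (by omega) (by omega))) hw, ?_⟩
    show reflA n ⟨j + d + 1, hmem⟩ (w (alphaA n k j)) = _
    rw [hweq, refl_right_extend n k (j + d) (by omega) hmem]
    rfl

lemma moveR_contract (n : ℕ) (I : Set (Fin n)) (k l : ℕ) :
    ∀ d, k ≤ l → l + d < n → (∀ m (hm : m < n), l < m → m ≤ l + d → (⟨m, hm⟩ : Fin n) ∈ I) →
    ∃ w ∈ Submonoid.closure (reflA n '' I), w (alphaA n k (l + d)) = alphaA n k l := by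
  intro d
  induction d with
  | zero => exact fun _ _ _ => ⟨1, Submonoid.one_mem _, rfl⟩
  | succ d ih =>
    intro hkl hd hI
    obtain ⟨w, hw, hweq⟩ := ih hkl (by omega) (fun m hm h1 h2 => hI m hm h1 (by omega))
    have hmem : ((l + d + 1 : ℕ)) < n := by omega
    have hstep : reflA n ⟨l + d + 1, hmem⟩ (alphaA n k (l + d + 1)) = alphaA n k (l + d) := by
      have := refl_right_contract n k (l + d + 1) (by omega) hmem
      exact this
    refine ⟨w * reflA n ⟨l + d + 1, hmem⟩, Submonoid.mul_mem _ hw (mem_gen n I (hI _ hmem (by omega) (by omega))), ?_⟩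
    show w (reflA n ⟨l + d + 1, hmem⟩ (alphaA n k (l + (d + 1)))) = _
    rw [show l + (d + 1) = l + d + 1 by omega, hstep, hweq]

lemma fix_outside (n : ℕ) (I : Set (Fin n)) {w : Function.End (Fin n → ℤ)}
    (hw : w ∈ Submonoid.closure (reflA n '' I)) :
    ∀ x (m : Fin n), m ∉ I → w x m = x m := by
  induction hw using Submonoid.closure_induction with
  | mem w hwmem =>
    obtain ⟨p, hp, rfl⟩ := hwmem
    intro x m hm
    have : m ≠ p := fun h => hm (h ▸ hp)
    simp [reflA, this]
  | one => intro x m _; rfl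
  | mul a b _ _ ha hb =>
    intro x m hm
    have : (a * b) x m = a (b x) m := rfl
    rw [this, ha (b x) m hm, hb x m hm]

theorem stmt2 (n : ℕ) (I : Set (Fin n))
    (i j k l : ℕ) (hij : i ≤ j) (hjn : j < n) (hkl : k ≤ l) (hln : l < n)
    -- the images under π_I are nonzero
    (hne1 : ∃ m : Fin n, m ∉ I ∧ alphaA n i j m ≠ 0)
    (hne2 : ∃ m : Fin n, m ∉ I ∧ alphaA n k l m ≠ 0) :
    (∀ m : Fin n, m ∉ I → alphaA n i j m = alphaA n k l m) ↔
      ∃ w ∈ Submonoid.closure (reflA n '' I), w (alphaA n i j) = alphaA n k l := by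
  constructor
  · intro h
    obtain ⟨mb, hmbI, hmb⟩ := hne1
    have hmb1 : i ≤ (mb : ℕ) ∧ (mb : ℕ) ≤ j := by
      by_contra hc; exact hmb (by simp [alphaA, hc])
    have hmb2' : alphaA n k l mb ≠ 0 := by rw [← h mb hmbI]; exact hmb
    have hmb2 : k ≤ (mb : ℕ) ∧ (mb : ℕ) ≤ l := by
      by_contra hc; exact hmb2' (by simp [alphaA, hc])
    have hIm : ∀ m (hm : m < n), (⟨m, hm⟩ : Fin n) ∉ I →
        ((i ≤ m ∧ m ≤ j) ↔ (k ≤ m ∧ m ≤ l)) := by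
      intro m hm hmI
      have := h ⟨m, hm⟩ hmI
      simp only [alphaA, Fin.val_mk] at this
      split_ifs at this <;> first | tauto | omega
    -- step 1: move left endpoint from i to k, obtaining α_{k,j}
    have step1 : ∃ w ∈ Submonoid.closure (reflA n '' I),
        w (alphaA n i j) = alphaA n k j := by
      rcases le_or_gt i k with hik | hik
      · have hkj : k ≤ j := le_trans hmb2.1 hmb1.2
        obtain ⟨w, hw, hweq⟩ := moveL_contract n I j hjn (k - i) i (by omega)
          (by
            intro m hm h1 h2
            by_contra hmI
            have := hIm m hm hmI
            omega)
        exact ⟨w, hw, by rwa [show i + (k - i) = k by omega] at hweq⟩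
      · obtain ⟨w, hw, hweq⟩ := moveL_extend n I j hjn (i - k) k (by omega)
          (by
            intro m hm h1 h2
            by_contra hmI
            have := hIm m hm hmI
            omega)
        exact ⟨w, hw, by rwa [show k + (i - k) = i by omega] at hweq⟩
    obtain ⟨w1, hw1, hw1eq⟩ := step1
    have hkj : k ≤ j := le_trans hmb2.1 hmb1.2
    -- step 2: move right endpoint from j to l, obtaining α_{k,l}
    have step2 : ∃ w ∈ Submonoid.closure (reflA n '' I),
        w (alphaA n k j) = alphaA n k l := by
      rcases le_or_gt j l with hjl | hjl
      · obtain ⟨w, hw, hweq⟩ := moveR_extend n I k (l - j) j hkj (by omega)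
          (by
            intro m hm h1 h2
            by_contra hmI
            have := hIm m hm hmI
            omega)
        exact ⟨w, hw, by rwa [show j + (l - j) = l by omega] at hweq⟩
      · obtain ⟨w, hw, hweq⟩ := moveR_contract n I k l (j - l) hkl (by omega)
          (by
            intro m hm h1 h2
            by_contra hmI
            have := hIm m hm hmI
            omega)
        exact ⟨w, hw, by rwa [show l + (j - l) = j by omega] at hweq⟩
    obtain ⟨w2, hw2, hw2eq⟩ := step2
    refine ⟨w2 * w1, Submonoid.mul_mem _ hw2 hw1, ?_⟩
    show w2 (w1 (alphaA n i j)) = _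
    rw [hw1eq, hw2eq]
  · rintro ⟨w, hw, hweq⟩ m hmI
    rw [← hweq, fix_outside n I hw _ m hmI]
end

section
/- Let Δ be a finite crystallographic root system, I ⊆ Δ, i ∉ I, and w = ℓ_I ℓ_{I+i}. Then the action of w on the root space h maps the span of {α_j : j ∈ ω_i(I)} isomorphically onto the span of {α_j : j ∈ I}, sending α_j to α_{ι_I ι_{I+i}(j)} for all j ∈ ω_i(I); consequently w induces a linear isomorphism M_i : h/span{α_j : j ∈ ω_i(I)} → h/span{α_j : j ∈ I}. -/
/-!
STATEMENT 8: Let `Δ` be a finite crystallographic root system, `I ⊆ Δ`, `i ∉ I`, and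
`w = ℓ_I ℓ_{I+i}`.  Then the action of `w` on the root space `h` maps the span of
`{αⱼ : j ∈ ω_i(I)}` isomorphically onto the span of `{αⱼ : j ∈ I}`, sending `αⱼ` to
`α_{ι_I ι_{I+i}(j)}` for all `j ∈ ω_i(I)`; consequently `w` induces a linear isomorphism
`M_i : h / span{αⱼ : j ∈ ω_i(I)} → h / span{αⱼ : j ∈ I}`.

We work in simple-root coordinates `h = Δ → ℝ`, so `αⱼ = Pi.single j 1`.  The action of
the longest element `ℓ_Γ` of the parabolic `W_Γ` is recorded through its two defining
properties: `ℓ_Γ(αⱼ) = -α_{ι_Γ(j)}` for `j ∈ Γ` (where `ι_Γ` is the Dynkin involution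
of `Γ`), and `ℓ_Γ ∈ W_Γ` changes only the coordinates indexed by `Γ`.
Here `ω_i(I) = (I ∪ {i}) \ {ι_{I+i}(i)}` and `w` acts as `LIi` followed by `LI`.
-/
theorem stmt8 {Δ : Type*} [Fintype Δ] [DecidableEq Δ]
    (I : Set Δ) (i : Δ) (hi : i ∉ I)
    (ιI ιIi : Δ → Δ)
    -- ι_I and ι_{I+i} are involutions of I and of I ∪ {i}
    (hιI : ∀ j ∈ I, ιI j ∈ I) (hιIinv : ∀ j ∈ I, ιI (ιI j) = j)
    (hιIi : ∀ j ∈ I ∪ {i}, ιIi j ∈ I ∪ {i}) (hιIiinv : ∀ j ∈ I ∪ {i}, ιIi (ιIi j) = j)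
    (LI LIi : (Δ → ℝ) ≃ₗ[ℝ] (Δ → ℝ))
    -- ℓ_Γ sends the simple root αⱼ to -α_{ι_Γ(j)} for j ∈ Γ
    (hLI : ∀ j ∈ I, LI (Pi.single j 1) = -(Pi.single (ιI j) 1 : Δ → ℝ))
    (hLIi : ∀ j ∈ I ∪ {i}, LIi (Pi.single j 1) = -(Pi.single (ιIi j) 1 : Δ → ℝ))
    -- ℓ_Γ ∈ W_Γ changes only the coordinates indexed by Γ
    (hLIfix : ∀ x, ∀ k ∉ I, LI x k = x k)
    (hLIifix : ∀ x, ∀ k ∉ I ∪ {i}, LIi x k = x k) :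
    -- w sends αⱼ to α_{ι_I(ι_{I+i}(j))} ∈ span{αⱼ : j ∈ I} for j ∈ ω_i(I) ...
    (∀ j ∈ (I ∪ {i}) \ {ιIi i},
        (LIi.trans LI) (Pi.single j 1) = (Pi.single (ιI (ιIi j)) 1 : Δ → ℝ) ∧
        ιI (ιIi j) ∈ I) ∧
    -- ... mapping span{αⱼ : j ∈ ω_i(I)} isomorphically onto span{αⱼ : j ∈ I} ...
    Submodule.map ((LIi.trans LI : (Δ → ℝ) ≃ₗ[ℝ] (Δ → ℝ)) :
          (Δ → ℝ) →ₗ[ℝ] (Δ → ℝ))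
        (Submodule.span ℝ ((fun j => (Pi.single j 1 : Δ → ℝ)) '' ((I ∪ {i}) \ {ιIi i})))
      = Submodule.span ℝ ((fun j => (Pi.single j 1 : Δ → ℝ)) '' I) ∧
    -- ... and hence induces an isomorphism M_i of the quotient spaces
    ∃ Mi : ((Δ → ℝ) ⧸ Submodule.span ℝ
              ((fun j => (Pi.single j 1 : Δ → ℝ)) '' ((I ∪ {i}) \ {ιIi i}))) ≃ₗ[ℝ]
           ((Δ → ℝ) ⧸ Submodule.span ℝ ((fun j => (Pi.single j 1 : Δ → ℝ)) '' I)),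
      ∀ x : Δ → ℝ,
        Mi (Submodule.Quotient.mk x) = Submodule.Quotient.mk ((LIi.trans LI) x) := by

  -- basic facts
  have hmemI : ∀ j ∈ (I ∪ {i}) \ {ιIi i}, ιIi j ∈ I := by
    intro j hj
    rcases hιIi j hj.1 with h | h
    · exact h
    · exfalso
      apply hj.2
      simp only [Set.mem_singleton_iff] at h ⊢
      have := hιIiinv j hj.1
      rw [h] at this
      exact this.symm
  have hpt : ∀ j ∈ (I ∪ {i}) \ {ιIi i},
      (LIi.trans LI) (Pi.single j 1) = (Pi.single (ιI (ιIi j)) 1 : Δ → ℝ) ∧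
      ιI (ιIi j) ∈ I := by
    intro j hj
    have h1 : ιIi j ∈ I := hmemI j hj
    constructor
    · simp only [LinearEquiv.trans_apply, hLIi j hj.1, map_neg, hLI _ h1, neg_neg]
    · exact hιI _ h1
  refine ⟨hpt, ?_, ?_⟩
  · have hset : (LIi.trans LI : (Δ → ℝ) →ₗ[ℝ] (Δ → ℝ)) ''
        ((fun j => (Pi.single j 1 : Δ → ℝ)) '' ((I ∪ {i}) \ {ιIi i}))
        = (fun j => (Pi.single j 1 : Δ → ℝ)) '' I := by
      ext v
      constructor
      · rintro ⟨_, ⟨j, hj, rfl⟩, rfl⟩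
        exact ⟨ιI (ιIi j), (hpt j hj).2, ((hpt j hj).1).symm⟩
      · rintro ⟨k, hk, rfl⟩
        have hkI : ιI k ∈ I := hιI k hk
        have hkIi : ιI k ∈ I ∪ {i} := Or.inl hkI
        set j := ιIi (ιI k) with hjdef
        have hjmem : j ∈ I ∪ {i} := hιIi _ hkIi
        have hji : ιIi j = ιI k := hιIiinv _ hkIi
        have hjne : j ∉ ({ιIi i} : Set Δ) := by
          simp only [Set.mem_singleton_iff]
          intro h
          have : ιIi j = i := by
            rw [h, hιIiinv i (Or.inr rfl)]
          rw [hji] at this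
          exact hi (this ▸ hkI)
        have hjω : j ∈ (I ∪ {i}) \ {ιIi i} := ⟨hjmem, hjne⟩
        refine ⟨Pi.single j 1, ⟨j, hjω, rfl⟩, ?_⟩
        have := (hpt j hjω).1
        rw [hji, hιIinv k hk] at this
        exact this
    rw [Submodule.map_span, hset]
  · have hmap : Submodule.map ((LIi.trans LI : (Δ → ℝ) ≃ₗ[ℝ] (Δ → ℝ)) :
          (Δ → ℝ) →ₗ[ℝ] (Δ → ℝ))
        (Submodule.span ℝ ((fun j => (Pi.single j 1 : Δ → ℝ)) '' ((I ∪ {i}) \ {ιIi i})))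
        = Submodule.span ℝ ((fun j => (Pi.single j 1 : Δ → ℝ)) '' I) := by
      have hset : (LIi.trans LI : (Δ → ℝ) →ₗ[ℝ] (Δ → ℝ)) ''
          ((fun j => (Pi.single j 1 : Δ → ℝ)) '' ((I ∪ {i}) \ {ιIi i}))
          = (fun j => (Pi.single j 1 : Δ → ℝ)) '' I := by
        ext v
        constructor
        · rintro ⟨_, ⟨j, hj, rfl⟩, rfl⟩
          exact ⟨ιI (ιIi j), (hpt j hj).2, ((hpt j hj).1).symm⟩
        · rintro ⟨k, hk, rfl⟩
          have hkI : ιI k ∈ I := hιI k hk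
          have hkIi : ιI k ∈ I ∪ {i} := Or.inl hkI
          set j := ιIi (ιI k) with hjdef
          have hjmem : j ∈ I ∪ {i} := hιIi _ hkIi
          have hji : ιIi j = ιI k := hιIiinv _ hkIi
          have hjne : j ∉ ({ιIi i} : Set Δ) := by
            simp only [Set.mem_singleton_iff]
            intro h
            have : ιIi j = i := by
              rw [h, hιIiinv i (Or.inr rfl)]
            rw [hji] at this
            exact hi (this ▸ hkI)
          have hjω : j ∈ (I ∪ {i}) \ {ιIi i} := ⟨hjmem, hjne⟩
          refine ⟨Pi.single j 1, ⟨j, hjω, rfl⟩, ?_⟩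
          have := (hpt j hjω).1
          rw [hji, hιIinv k hk] at this
          exact this
      rw [Submodule.map_span, hset]
    exact ⟨Submodule.Quotient.equiv _ _ (LIi.trans LI) hmap, fun x => rfl⟩
end

section
/- With the notation above, the induced map M_i : h_{ω_i(I)} → h_I acts on the natural bases by e_k ↦ e_k + λ_k e_i for some non-negative integers λ_k when k ∉ I ∪ {i}, and e_i ↦ −e_i, where e_i ∈ h_{ω_i(I)} denotes the class of α_{ι_{I+i}(i)} and e_i ∈ h_I denotes the class of α_i. -/
/-!
STATEMENT 9: With the notation of the previous statement (`Δ` a finite crystallographic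
root system, `I ⊆ Δ`, `i ∉ I`, `ω_i(I) = (I ∪ {i}) \ {ι_{I+i}(i)}`, and `M_i` the map
induced by the action `w = ℓ_I ℓ_{I+i}`), the induced map `M_i : h_{ω_i(I)} → h_I` acts
on the natural bases by `e_k ↦ e_k + λ_k e_i` for some non-negative integers `λ_k` when
`k ∉ I ∪ {i}`, and `e_i ↦ -e_i`, where on the source `e_i` denotes the class of
`α_{ι_{I+i}(i)}` and on the target `e_i` denotes the class of `α_i`.

We work in simple-root coordinates `h = Δ → ℝ`, identifying `h_Γ = h / span{αⱼ : j ∈ Γ}`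
with the coordinates outside `Γ`.  Thus the claim `M_i(e_k) = e_k + λ_k e_i` amounts to:
the coordinates of `w(α_k)` outside `I` agree with those of `α_k + λ_k α_i`, and the
claim `M_i(e_i) = -e_i` amounts to: the coordinates of `w(α_{ι_{I+i}(i)})` outside `I`
agree with those of `-α_i`.  The properties of `ℓ_I`, `ℓ_{I+i}` and the root system
(crystallographic: images of simple roots are roots, i.e. sign-coherent integer vectors)
are recorded as hypotheses.
-/
theorem stmt9 {Δ : Type*} [Fintype Δ] [DecidableEq Δ]
    (I : Set Δ) (i : Δ) (hi : i ∉ I)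
    (ιIi : Δ → Δ)
    (hιIi : ∀ j ∈ I ∪ {i}, ιIi j ∈ I ∪ {i}) (hιIiinv : ∀ j ∈ I ∪ {i}, ιIi (ιIi j) = j)
    (LI LIi : (Δ → ℝ) ≃ₗ[ℝ] (Δ → ℝ))
    (hLIi : ∀ j ∈ I ∪ {i}, LIi (Pi.single j 1) = -(Pi.single (ιIi j) 1 : Δ → ℝ))
    -- ℓ_Γ ∈ W_Γ changes only the coordinates indexed by Γ
    (hLIfix : ∀ x, ∀ k ∉ I, LI x k = x k)
    (hLIifix : ∀ x, ∀ k ∉ I ∪ {i}, LIi x k = x k)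
    -- crystallographic condition: w maps each simple root to a root,
    -- i.e. to a sign-coherent integer vector
    (hroot : ∀ k : Δ, ∃ r : Δ → ℤ,
      (∀ j, (LIi.trans LI) (Pi.single k 1) j = (r j : ℝ)) ∧
      ((∀ j, 0 ≤ r j) ∨ (∀ j, r j ≤ 0))) :
    -- M_i (e_k) = e_k + λ_k e_i with λ_k a non-negative integer, for k ∉ I ∪ {i}
    (∀ k, k ∉ I ∪ {i} → ∃ lam : ℕ,
        (LIi.trans LI) (Pi.single k 1) i = (lam : ℝ) ∧
        ∀ j, j ∉ I → j ≠ i →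
          (LIi.trans LI) (Pi.single k 1) j = (Pi.single k 1 : Δ → ℝ) j) ∧
    -- M_i (e_i) = -e_i, where e_i on the source is the class of α_{ι_{I+i}(i)}
    (∀ j, j ∉ I →
        (LIi.trans LI) (Pi.single (ιIi i) 1) j = (-(Pi.single i 1 : Δ → ℝ)) j) := by

  have hii : i ∈ I ∪ {i} := Or.inr rfl
  constructor
  · intro k hk
    -- coordinates outside I ∪ {i} are fixed
    have hfix : ∀ j, j ∉ I → j ≠ i →
        (LIi.trans LI) (Pi.single k 1) j = (Pi.single k 1 : Δ → ℝ) j := by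
      intro j hjI hji
      have hj : j ∉ I ∪ {i} := by
        intro h; rcases h with h | h
        · exact hjI h
        · exact hji h
      simp only [LinearEquiv.trans_apply]
      rw [hLIfix _ _ hjI, hLIifix _ _ hj]
    obtain ⟨r, hr, hsign⟩ := hroot k
    -- coordinate k of the image is 1, so sign is nonneg
    have hk1 : (r k : ℝ) = 1 := by
      rw [← hr k, hfix k (fun h => hk (Or.inl h)) (fun h => hk (Or.inr h))]
      simp
    have hrk : r k = 1 := by exact_mod_cast hk1
    have hpos : ∀ j, 0 ≤ r j := by
      rcases hsign with h | h
      · exact h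
      · intro j; have := h k; omega
    refine ⟨(r i).toNat, ?_, hfix⟩
    rw [hr i]
    have : ((r i).toNat : ℤ) = r i := Int.toNat_of_nonneg (hpos i)
    exact_mod_cast congrArg (fun z : ℤ => (z : ℝ)) this.symm
  · intro j hjI
    have h1 : LIi (Pi.single (ιIi i) 1) = -(Pi.single i 1 : Δ → ℝ) := by
      rw [hLIi _ (hιIi i hii), hιIiinv i hii]
    simp only [LinearEquiv.trans_apply, h1]
    rw [hLIfix _ _ hjI]
end
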